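/- An arbitrary (countable) product of compact metric dynamical systems each having limit shadowing has limit shadowing. -/

import Mathlib

open Filter Topology

attribute [local instance] PiCountable.metricSpace

open Encodable in
private lemma dist_pi_le_sum_add_tail {X : ℕ → Type*} [∀ n, MetricSpace (X n)]
    (x y : ∀ n, X n) (K : Finset ℕ) :
    dist x y ≤ (∑ n ∈ K, dist (x n) (y n)) +
      ∑' n : ↑(↑K : Set ℕ)ᶜ, ((1 / 2 : ℝ)) ^ encode (n : ℕ) := by
  calc
    dist x y = ∑' n : ℕ, min ((1 / 2) ^ encode n : ℝ) (dist (x n) (y n)) := by rw [PiCountable.dist_eq_tsum, one_div]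
    _ = (∑ n ∈ K, min ((1 / 2) ^ encode n : ℝ) (dist (x n) (y n))) +
          ∑' n : ↑(↑K : Set ℕ)ᶜ, min ((1 / 2) ^ encode (n : ℕ) : ℝ) (dist (x n) (y n)) :=
      (Summable.sum_add_tsum_compl (by simpa only [one_div] using PiCountable.dist_summable x y)).symm
    _ ≤ (∑ n ∈ K, dist (x n) (y n)) + ∑' n : ↑(↑K : Set ℕ)ᶜ, ((1 / 2 : ℝ)) ^ encode (n : ℕ) := by
      refine add_le_add (Finset.sum_le_sum fun i _ => min_le_right _ _) ?_
      refine Summable.tsum_le_tsum (h := fun i => min_le_left _ _) ?_ ?_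
      · exact Summable.subtype (by simpa only [one_div] using PiCountable.dist_summable x y :
          Summable fun n : ℕ => min ((1 / 2 : ℝ) ^ encode n) (dist (x n) (y n))) (↑K : Set ℕ)ᶜ
      · exact Summable.subtype summable_geometric_two_encode (↑K : Set ℕ)ᶜ

private lemma iterate_pi {X : ℕ → Type*} (f : ∀ n, X n → X n) (z : ∀ n, X n) (i n : ℕ) :
    (fun p m => f m (p m))^[i] z n = (f n)^[i] (z n) := by
  induction i with
  | zero => rfl
  | succ i ih =>
    rw [Function.iterate_succ_apply', Function.iterate_succ_apply']
    simp [ih]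

/-- a countable product of compact metric systems each having limit
shadowing has limit shadowing (with a compatible product metric). -/
theorem limitShadowing_pi
    {X : ℕ → Type*} [∀ n, MetricSpace (X n)] [∀ n, CompactSpace (X n)]
    (f : ∀ n, X n → X n) (hf : ∀ n, Continuous (f n))
    (hsh : ∀ n, ∀ x : ℕ → X n,
      Tendsto (fun i => dist (f n (x i)) (x (i + 1))) atTop (nhds 0) →
      ∃ z : X n, Tendsto (fun i => dist ((f n)^[i] z) (x i)) atTop (nhds 0)) :
    ∀ x : ℕ → (∀ n, X n),
      Tendsto (fun i => dist ((fun p n => f n (p n)) (x i)) (x (i + 1))) atTop (nhds 0) →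
      ∃ z : ∀ n, X n,
        Tendsto (fun i => dist ((fun p n => f n (p n))^[i] z) (x i)) atTop (nhds 0) := by
  intro x hx
  -- coordinate pseudo-orbits
  have hcoord : ∀ n, Tendsto (fun i => dist (f n (x i n)) (x (i + 1) n)) atTop (nhds 0) := by
    intro n
    apply squeeze_zero' (Eventually.of_forall fun i => dist_nonneg)
    · have hev : ∀ᶠ i in atTop,
          dist ((fun p m => f m (p m)) (x i)) (x (i + 1)) < (1 / 2) ^ Encodable.encode n := by
        have hpos : (0 : ℝ) < (1 / 2) ^ Encodable.encode n := by positivity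
        exact hx.eventually (gt_mem_nhds hpos)
      filter_upwards [hev] with i hi
      exact PiCountable.dist_le_dist_pi_of_dist_lt (by simpa only [one_div] using hi)
    · exact hx
  choose z hz using fun n => hsh n (fun i => x i n) (hcoord n)
  refine ⟨z, ?_⟩
  have key : ∀ ε > (0 : ℝ), ∀ᶠ i in atTop,
      dist ((fun p n => f n (p n))^[i] z) (x i) < ε := by
    intro ε εpos
    obtain ⟨K, hK⟩ :
        ∃ K : Finset ℕ, (∑' n : { m : ℕ // m ∉ K }, (1 / 2 : ℝ) ^ Encodable.encode (n : ℕ)) <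
          ε / 2 :=
      ((tendsto_order.1 (tendsto_tsum_compl_atTop_zero
        fun n : ℕ => (1 / 2 : ℝ) ^ Encodable.encode n)).2 _ (half_pos εpos)).exists
    obtain ⟨δ, δpos, hδ⟩ : ∃ δ : ℝ, 0 < δ ∧ (K.card : ℝ) * δ < ε / 2 :=
      exists_pos_mul_lt (half_pos εpos) _
    have hev : ∀ᶠ i in atTop, ∀ n ∈ K, dist ((f n)^[i] (z n)) (x i n) < δ := by
      rw [eventually_all_finset]
      intro n _
      exact (hz n).eventually (gt_mem_nhds δpos)
    filter_upwards [hev] with i hi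
    calc
      dist ((fun p n => f n (p n))^[i] z) (x i)
          ≤ (∑ n ∈ K, dist ((fun p n => f n (p n))^[i] z n) (x i n)) +
            ∑' n : ↑(↑K : Set ℕ)ᶜ, ((1 / 2 : ℝ)) ^ Encodable.encode (n : ℕ) :=
        dist_pi_le_sum_add_tail _ _ K
      _ < (∑ _n ∈ K, δ) + ε / 2 := by
        refine add_lt_add_of_le_of_lt (Finset.sum_le_sum fun n hn => ?_) hK
        rw [iterate_pi]
        exact (hi n hn).le
      _ ≤ ε / 2 + ε / 2 := by
        refine add_le_add_left ?_ _
        simpa only [Finset.sum_const, nsmul_eq_mul] using hδ.le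
      _ = ε := add_halves _
  rw [Metric.tendsto_atTop]
  intro ε εpos
  obtain ⟨N, hN⟩ := (key ε εpos).exists_forall_of_atTop
  exact ⟨N, fun i hi => by
    rw [Real.dist_eq, sub_zero, abs_of_nonneg dist_nonneg]
    exact hN i hi⟩
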